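/- arXiv:2301.05595 — 3 statements merged into one kernel-verified Lean document; each statement's English description precedes it below -/
import Mathlib

section
/- The matrix exponential of a skew-symmetric matrix ω̃ equals the Rodrigues formula: exp(ω̃) = I + (sin‖ω‖/‖ω‖) ω̃ + ((1 - cos‖ω‖)/‖ω‖²) ω̃², for ω ≠ 0. -/
open Matrix Real

noncomputable def norm3 (ω : Fin 3 → ℝ) : ℝ := Real.sqrt (ω 0 ^ 2 + ω 1 ^ 2 + ω 2 ^ 2)

def skew (ω : Fin 3 → ℝ) : Matrix (Fin 3) (Fin 3) ℝ :=
  !![0, -ω 2, ω 1; ω 2, 0, -ω 0; -ω 1, ω 0, 0]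

attribute [local instance] Matrix.linftyOpNormedRing Matrix.linftyOpNormedAlgebra

lemma skew_cube (ω : Fin 3 → ℝ) :
    skew ω ^ 3 = (-(ω 0 ^ 2 + ω 1 ^ 2 + ω 2 ^ 2)) • skew ω := by
  ext i j
  fin_cases i <;> fin_cases j <;>
    simp [skew, pow_succ, Matrix.mul_apply, Fin.sum_univ_three] <;> ring

lemma norm3_pos (ω : Fin 3 → ℝ) (hω : ω ≠ 0) : 0 < norm3 ω := by
  rw [norm3]
  apply Real.sqrt_pos.mpr
  rcases Function.ne_iff.mp hω with ⟨i, hi⟩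
  have h0 : (0:ℝ) ≤ ω 0 ^ 2 := sq_nonneg _
  have h1 : (0:ℝ) ≤ ω 1 ^ 2 := sq_nonneg _
  have h2 : (0:ℝ) ≤ ω 2 ^ 2 := sq_nonneg _
  simp only [Pi.zero_apply] at hi
  have hp : (0:ℝ) < ω i ^ 2 := sq_pos_of_ne_zero hi
  fin_cases i
  · have h : (0:ℝ) < ω 0 ^ 2 := hp
    nlinarith
  · have h : (0:ℝ) < ω 1 ^ 2 := hp
    nlinarith
  · have h : (0:ℝ) < ω 2 ^ 2 := hp
    nlinarith

lemma sq_norm3 (ω : Fin 3 → ℝ) : norm3 ω ^ 2 = ω 0 ^ 2 + ω 1 ^ 2 + ω 2 ^ 2 := by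
  rw [norm3, Real.sq_sqrt] ; positivity

lemma skew_pow_odd (ω : Fin 3 → ℝ) (k : ℕ) :
    skew ω ^ (2 * k + 1) = ((-1 : ℝ) ^ k * norm3 ω ^ (2 * k)) • skew ω := by
  induction k with
  | zero => simp
  | succ n ih =>
    have : 2 * (n + 1) + 1 = (2 * n + 1) + 2 := by ring
    rw [this, pow_add, ih, smul_mul_assoc,
      show skew ω * skew ω ^ 2 = skew ω ^ 3 from (pow_succ' _ 2).symm,
      skew_cube, ← sq_norm3, smul_smul]
    ring_nf

lemma skew_pow_even (ω : Fin 3 → ℝ) (k : ℕ) :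
    skew ω ^ (2 * k + 2) = ((-1 : ℝ) ^ k * norm3 ω ^ (2 * k)) • skew ω ^ 2 := by
  have : 2 * k + 2 = (2 * k + 1) + 1 := by ring
  rw [this, pow_succ, skew_pow_odd, smul_mul_assoc, ← pow_two]

theorem rodrigues (ω : Fin 3 → ℝ) (hω : ω ≠ 0) :
    NormedSpace.exp (skew ω) =
      1 + (Real.sin (norm3 ω) / norm3 ω) • skew ω
        + ((1 - Real.cos (norm3 ω)) / norm3 ω ^ 2) • (skew ω ^ 2) := by
  set θ := norm3 ω with hθdef
  have hθ : 0 < θ := norm3_pos ω hω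
  have hθ0 : θ ≠ 0 := ne_of_gt hθ
  set A := skew ω with hA
  set f : ℕ → Matrix (Fin 3) (Fin 3) ℝ := fun n => ((n.factorial : ℝ)⁻¹) • A ^ n with hf
  -- odd part
  have hodd : HasSum (fun k => f (2 * k + 1)) ((Real.sin θ / θ) • A) := by
    have h1 := (Real.hasSum_sin θ).div_const θ
    have h2 := h1.smul_const A
    convert h2 using 2 with k
    rw [hf]
    simp only [show A ^ (2 * k + 1) = ((-1 : ℝ) ^ k * θ ^ (2 * k)) • A from skew_pow_odd ω k, smul_smul]
    congr 1
    rw [pow_succ θ (2 * k)]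
    field_simp
  -- even part (≥ 2)
  have hcos : HasSum (fun k : ℕ => (-1 : ℝ) ^ (k + 1) * θ ^ (2 * (k + 1)) / ((2 * (k + 1)).factorial : ℝ))
      (Real.cos θ - 1) := by
    rw [hasSum_nat_add_iff
      (f := fun n : ℕ => (-1 : ℝ) ^ n * θ ^ (2 * n) / ((2 * n).factorial : ℝ)) 1]
    simpa using Real.hasSum_cos θ
  have heven : HasSum (fun k => f (2 * k + 2)) (((1 - Real.cos θ) / θ ^ 2) • A ^ 2) := by
    have h1 := (hcos.div_const (θ ^ 2)).neg
    have he : -((Real.cos θ - 1) / θ ^ 2) = (1 - Real.cos θ) / θ ^ 2 := by ring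
    rw [he] at h1
    have h2 := h1.smul_const (A ^ 2)
    convert h2 using 2 with k
    rw [hf]
    simp only [show A ^ (2 * k + 2) = ((-1 : ℝ) ^ k * θ ^ (2 * k)) • A ^ 2 from skew_pow_even ω k, smul_smul]
    congr 1
    rw [show θ ^ (2 * (k + 1)) = θ ^ (2 * k) * θ ^ 2 by ring]
    field_simp
    ring
  have hshift : HasSum (fun n => f (n + 1)) ((Real.sin θ / θ) • A + ((1 - Real.cos θ) / θ ^ 2) • A ^ 2) := by
    refine HasSum.even_add_odd ?_ ?_
    · convert hodd using 2 with k
    · convert heven using 2 with k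
  have htotal : HasSum f (((Real.sin θ / θ) • A + ((1 - Real.cos θ) / θ ^ 2) • A ^ 2) + 1) := by
    have := (hasSum_nat_add_iff (f := f) 1).mp hshift
    simpa [hf] using this
  rw [NormedSpace.exp_eq_tsum (𝕂 := ℝ)]
  refine Eq.trans ?_ (by abel :
    (Real.sin θ / θ) • A + ((1 - Real.cos θ) / θ ^ 2) • A ^ 2 + 1 =
      1 + (Real.sin θ / θ) • A + ((1 - Real.cos θ) / θ ^ 2) • A ^ 2)
  exact htotal.tsum_eq
end

section
/- The SO(3)-tangent operator T(ω) := I - (β(ω)/2) ω̃ + ((1 - α(ω))/‖ω‖²) ω̃², where α(ω) = sin‖ω‖/‖ω‖ and β(ω) = 2(1 - cos‖ω‖)/‖ω‖², and the matrix T⁻¹(ω) := I + (1/2) ω̃ + ((1 - γ(ω))/‖ω‖²) ω̃² with γ(ω) = (‖ω‖/2) cot(‖ω‖/2), satisfy T(ω) T⁻¹(ω) = I for all ω with 0 < ‖ω‖ < 2π. -/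
open Matrix Real

noncomputable def Tso (ω : Fin 3 → ℝ) : Matrix (Fin 3) (Fin 3) ℝ :=
  1 - (2 * (1 - Real.cos (norm3 ω)) / norm3 ω ^ 2 / 2) • skew ω
    + ((1 - Real.sin (norm3 ω) / norm3 ω) / norm3 ω ^ 2) • (skew ω ^ 2)


noncomputable def Tinv (ω : Fin 3 → ℝ) : Matrix (Fin 3) (Fin 3) ℝ :=
  1 + (1 / 2 : ℝ) • skew ω
    + ((1 - norm3 ω / 2 * Real.cot (norm3 ω / 2)) / norm3 ω ^ 2) • (skew ω ^ 2)

theorem tangent_mul_inv (ω : Fin 3 → ℝ) (h0 : 0 < norm3 ω) (h2 : norm3 ω < 2 * Real.pi) :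
    Tso ω * Tinv ω = 1 := by
  set n := norm3 ω with hn_def
  have hn : n ≠ 0 := ne_of_gt h0
  have hn2 : n ^ 2 = ω 0 ^ 2 + ω 1 ^ 2 + ω 2 ^ 2 := Real.sq_sqrt (by positivity)
  have hsin : Real.sin (n / 2) > 0 :=
    Real.sin_pos_of_pos_of_lt_pi (by linarith) (by linarith)
  have hcosn : 1 - Real.cos n = 2 * Real.sin (n / 2) ^ 2 := by
    have : Real.cos n = Real.cos (2 * (n / 2)) := by ring_nf
    rw [this, Real.cos_two_mul', Real.cos_sq']; ring
  have hcne : 1 - Real.cos n ≠ 0 := by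
    rw [hcosn]; positivity
  have hsinn : Real.sin n = 2 * Real.sin (n / 2) * Real.cos (n / 2) := by
    have : Real.sin n = Real.sin (2 * (n / 2)) := by ring_nf
    rw [this, Real.sin_two_mul]
  have hcot : Real.cot (n / 2) = Real.sin n / (1 - Real.cos n) := by
    rw [Real.cot_eq_cos_div_sin, hsinn, hcosn]
    field_simp
  set S := skew ω with hS_def
  have hS3 : S ^ 3 = (-(n ^ 2)) • S := by
    have hpow : S ^ 3 = S * S * S := by rw [pow_succ, pow_succ, pow_one]
    rw [hpow, hn2, hS_def]
    ext i j
    fin_cases i <;> fin_cases j <;>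
      simp [skew, Matrix.mul_apply, Fin.sum_univ_three] <;> ring
  have hSS : S * S = S ^ 2 := (sq S).symm
  have hS2S : S ^ 2 * S = S ^ 3 := (pow_succ S 2).symm
  have hSS2 : S * S ^ 2 = S ^ 3 := (pow_succ' S 2).symm
  have hS4 : S ^ 2 * S ^ 2 = (-(n ^ 2)) • S ^ 2 := by
    have h1 : S ^ 2 * S ^ 2 = S ^ 3 * S := by
      rw [← pow_add, ← pow_succ]
    rw [h1, hS3, Matrix.smul_mul, hSS]
  set a : ℝ := 2 * (1 - Real.cos n) / n ^ 2 / 2 with ha_def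
  set b : ℝ := (1 - Real.sin n / n) / n ^ 2 with hb_def
  set d : ℝ := (1 - n / 2 * Real.cot (n / 2)) / n ^ 2 with hd_def
  have expand : Tso ω * Tinv ω =
      1 + ((1 / 2 : ℝ) - a - n ^ 2 * (b * (1 / 2) - a * d)) • S
        + (b + d - a * (1 / 2) - n ^ 2 * (b * d)) • S ^ 2 := by
    show (1 - a • S + b • S ^ 2) * (1 + (1/2 : ℝ) • S + d • S ^ 2) = _
    simp only [mul_add, add_mul, sub_mul, mul_sub, mul_one, one_mul,
      Matrix.smul_mul, Matrix.mul_smul, smul_smul, hSS, hS2S, hSS2, hS3, hS4]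
    module
  rw [expand]
  have e1 : (1 / 2 : ℝ) - a - n ^ 2 * (b * (1 / 2) - a * d) = 0 := by
    rw [ha_def, hb_def, hd_def, hcot]
    field_simp
    ring
  have e2 : b + d - a * (1 / 2) - n ^ 2 * (b * d) = 0 := by
    rw [ha_def, hb_def, hd_def, hcot]
    have pyth : Real.sin n ^ 2 = 1 - Real.cos n ^ 2 := Real.sin_sq n
    field_simp
    linear_combination (-n) * Real.sin_sq_add_cos_sq n
  rw [e1, e2]
  simp
end

section
/- For a smooth curve Z(t) of n×n matrices, the derivative of the matrix exponential satisfies (d/dt) exp(Z(t)) = exp(Z(t)) · dexp₋Z(t)(Ż(t)), where dexp_X(Y) = Σ_{i≥0} ad(X)^i(Y)/(i+1)!. -/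
open Matrix

attribute [local instance] Matrix.linftyOpNormedAddCommGroup Matrix.linftyOpNormedRing Matrix.linftyOpNormedSpace Matrix.linftyOpNormedAlgebra

def adM {n : ℕ} (X Y : Matrix (Fin n) (Fin n) ℝ) : Matrix (Fin n) (Fin n) ℝ := X * Y - Y * X

noncomputable def dexp {n : ℕ} (X Y : Matrix (Fin n) (Fin n) ℝ) : Matrix (Fin n) (Fin n) ℝ :=
  ∑' i : ℕ, (((i + 1).factorial : ℝ))⁻¹ • (adM X)^[i] Y

namespace DexpAux
open Finset
variable {n : ℕ}
local notation "M" => Matrix (Fin n) (Fin n) ℝ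

noncomputable def Sk (k : ℕ) (A B : M) : M := ∑ j ∈ range k, A ^ j * B * A ^ (k - 1 - j)

lemma Sk_zero (A B : M) : Sk 0 A B = 0 := by simp [Sk]

lemma Sk_succ (k : ℕ) (A B : M) : Sk (k + 1) A B = Sk k A B * A + A ^ k * B := by
  rw [Sk, Finset.sum_range_succ, Sk, Finset.sum_mul]
  congr 1
  · refine Finset.sum_congr rfl fun j hj => ?_
    rw [Finset.mem_range] at hj
    have : k + 1 - 1 - j = (k - 1 - j) + 1 := by omega
    rw [this, pow_succ, ← mul_assoc]
  · simp

lemma norm_pow_mul_le (A C : M) (j : ℕ) : ‖A ^ j * C‖ ≤ ‖A‖ ^ j * ‖C‖ := by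
  induction j with
  | zero => simp
  | succ j ih =>
    calc ‖A ^ (j+1) * C‖ = ‖A * (A ^ j * C)‖ := by rw [pow_succ']; rw [mul_assoc]
    _ ≤ ‖A‖ * ‖A ^ j * C‖ := norm_mul_le _ _
    _ ≤ ‖A‖ * (‖A‖ ^ j * ‖C‖) := by
        exact mul_le_mul_of_nonneg_left ih (norm_nonneg A)
    _ = ‖A‖ ^ (j+1) * ‖C‖ := by ring

lemma norm_mul_pow_le (A C : M) (j : ℕ) : ‖C * A ^ j‖ ≤ ‖C‖ * ‖A‖ ^ j := by
  induction j with
  | zero => simp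
  | succ j ih =>
    calc ‖C * A ^ (j+1)‖ = ‖(C * A ^ j) * A‖ := by rw [pow_succ, mul_assoc]
    _ ≤ ‖C * A ^ j‖ * ‖A‖ := norm_mul_le _ _
    _ ≤ (‖C‖ * ‖A‖ ^ j) * ‖A‖ := mul_le_mul_of_nonneg_right ih (norm_nonneg A)
    _ = ‖C‖ * ‖A‖ ^ (j+1) := by ring

lemma norm_triple (A B : M) (j l : ℕ) : ‖A ^ j * B * A ^ l‖ ≤ ‖A‖ ^ j * ‖B‖ * ‖A‖ ^ l := by
  calc ‖A ^ j * B * A ^ l‖ ≤ ‖A ^ j * B‖ * ‖A‖ ^ l := norm_mul_pow_le A _ l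
  _ ≤ (‖A‖ ^ j * ‖B‖) * ‖A‖ ^ l :=
      mul_le_mul_of_nonneg_right (norm_pow_mul_le A B j) (by positivity)

lemma Sk_norm_le (k : ℕ) (A B : M) : ‖Sk k A B‖ ≤ k * ‖A‖ ^ (k - 1) * ‖B‖ := by
  calc ‖Sk k A B‖ ≤ ∑ j ∈ range k, ‖A ^ j * B * A ^ (k - 1 - j)‖ := norm_sum_le _ _
  _ ≤ ∑ j ∈ range k, ‖A‖ ^ (k-1) * ‖B‖ := by
      refine Finset.sum_le_sum fun j hj => ?_
      rw [Finset.mem_range] at hj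
      have h : j + (k - 1 - j) = k - 1 := by omega
      calc ‖A ^ j * B * A ^ (k - 1 - j)‖ ≤ ‖A‖ ^ j * ‖B‖ * ‖A‖ ^ (k - 1 - j) := norm_triple ..
      _ = ‖A‖ ^ (k - 1) * ‖B‖ := by rw [mul_right_comm, ← pow_add, h]
  _ = k * ‖A‖ ^ (k-1) * ‖B‖ := by rw [Finset.sum_const, card_range, nsmul_eq_mul, mul_assoc]

lemma fact_shift (a : ℝ) (k : ℕ) :
    (((k+1).factorial : ℝ))⁻¹ * ((k+1) * a ^ k) = ((k.factorial : ℝ))⁻¹ * a ^ k := by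
  rw [Nat.factorial_succ]
  push_cast
  rw [mul_inv]
  have : ((k:ℝ)+1) ≠ 0 := by positivity
  field_simp

lemma summable_aux (a : ℝ) : Summable fun k : ℕ => ((k.factorial : ℝ))⁻¹ * ((k : ℝ) * a ^ (k-1)) := by
  rw [← summable_nat_add_iff 1]
  refine (Real.summable_pow_div_factorial a).congr fun k => ?_
  simp only [Nat.add_sub_cancel]
  push_cast
  rw [fact_shift a k, div_eq_mul_inv, mul_comm]

lemma tsum_exp_real (a : ℝ) : ∑' k : ℕ, ((k.factorial : ℝ))⁻¹ * a ^ k = Real.exp a := by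
  rw [Real.exp_eq_exp_ℝ, NormedSpace.exp_eq_tsum (𝕂 := ℝ)]
  simp [smul_eq_mul]

lemma tsum_aux (a : ℝ) : ∑' k : ℕ, ((k.factorial : ℝ))⁻¹ * ((k : ℝ) * a ^ (k-1)) = Real.exp a := by
  rw [Summable.tsum_eq_zero_add (summable_aux a)]
  simp only [Nat.cast_zero, zero_mul, mul_zero, zero_add]
  rw [← tsum_exp_real a]
  refine tsum_congr fun k => ?_
  simp only [Nat.add_sub_cancel]
  push_cast
  exact fact_shift a k


lemma cast_pow_aux (a : ℝ) (k : ℕ) : (k : ℝ) * a ^ (k-1) * a = (k : ℝ) * a ^ k := by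
  cases k with
  | zero => simp
  | succ j => simp only [Nat.add_sub_cancel, pow_succ]; ring

lemma delta_le (A E : M) (k : ℕ) :
    ‖(A + E) ^ k - A ^ k - Sk k A E‖
      ≤ (‖A‖ + ‖E‖) ^ k - ‖A‖ ^ k - (k : ℝ) * ‖A‖ ^ (k-1) * ‖E‖ := by
  induction k with
  | zero => simp [Sk_zero]
  | succ k ih =>
    have hrec : (A + E) ^ (k+1) - A ^ (k+1) - Sk (k+1) A E
        = ((A + E) ^ k - A ^ k - Sk k A E) * (A + E) + Sk k A E * E := by
      rw [Sk_succ, pow_succ, pow_succ]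
      noncomm_ring
    rw [hrec]
    have h1 : ‖((A + E) ^ k - A ^ k - Sk k A E) * (A + E)‖
        ≤ ((‖A‖ + ‖E‖) ^ k - ‖A‖ ^ k - (k : ℝ) * ‖A‖ ^ (k-1) * ‖E‖) * (‖A‖ + ‖E‖) := by
      calc ‖((A + E) ^ k - A ^ k - Sk k A E) * (A + E)‖
          ≤ ‖(A + E) ^ k - A ^ k - Sk k A E‖ * ‖A + E‖ := norm_mul_le _ _
        _ ≤ _ := by
            apply mul_le_mul ih (norm_add_le A E) (norm_nonneg _)
            have := norm_nonneg ((A + E) ^ k - A ^ k - Sk k A E)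
            linarith [ih]
    have h2 : ‖Sk k A E * E‖ ≤ ((k:ℝ) * ‖A‖ ^ (k-1) * ‖E‖) * ‖E‖ :=
      le_trans (norm_mul_le _ _)
        (mul_le_mul_of_nonneg_right (Sk_norm_le k A E) (norm_nonneg E))
    calc ‖_ + _‖ ≤ _ := norm_add_le _ _
      _ ≤ ((‖A‖ + ‖E‖) ^ k - ‖A‖ ^ k - (k : ℝ) * ‖A‖ ^ (k-1) * ‖E‖) * (‖A‖ + ‖E‖)
            + ((k:ℝ) * ‖A‖ ^ (k-1) * ‖E‖) * ‖E‖ := add_le_add h1 h2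
      _ = (‖A‖ + ‖E‖) ^ (k+1) - ‖A‖ ^ (k+1) - ((k:ℝ)+1) * ‖A‖ ^ k * ‖E‖ := by
          have hc := cast_pow_aux ‖A‖ k
          rw [pow_succ, pow_succ]
          linear_combination (-‖E‖) * hc
      _ = (‖A‖ + ‖E‖) ^ (k+1) - ‖A‖ ^ (k+1) - ((k+1 : ℕ) : ℝ) * ‖A‖ ^ (k+1-1) * ‖E‖ := by
          push_cast [Nat.add_sub_cancel]
          ring


lemma summable_Sk (A B : M) : Summable fun k : ℕ => ((k.factorial : ℝ))⁻¹ • Sk k A B := by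
  have h : ∀ k : ℕ, ‖((k.factorial : ℝ))⁻¹ • Sk k A B‖
      ≤ ((k.factorial : ℝ))⁻¹ * ((k : ℝ) * ‖A‖ ^ (k-1)) * ‖B‖ := by
    intro k
    rw [norm_smul, Real.norm_eq_abs, abs_of_nonneg (by positivity)]
    calc ((k.factorial:ℝ))⁻¹ * ‖Sk k A B‖
        ≤ ((k.factorial:ℝ))⁻¹ * ((k:ℝ) * ‖A‖ ^ (k-1) * ‖B‖) :=
          mul_le_mul_of_nonneg_left (Sk_norm_le k A B) (by positivity)
      _ = ((k.factorial : ℝ))⁻¹ * ((k : ℝ) * ‖A‖ ^ (k-1)) * ‖B‖ := by ring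
  exact Summable.of_norm_bounded (((summable_aux ‖A‖)).mul_right ‖B‖) h

noncomputable def Lfun (A B : M) : M := ∑' k : ℕ, ((k.factorial : ℝ))⁻¹ • Sk k A B

lemma Sk_add (k : ℕ) (A B C : M) : Sk k A (B + C) = Sk k A B + Sk k A C := by
  simp only [Sk, mul_add, add_mul, Finset.sum_add_distrib]

lemma Sk_smul (k : ℕ) (c : ℝ) (A B : M) : Sk k A (c • B) = c • Sk k A B := by
  simp only [Sk, Finset.smul_sum, mul_smul_comm, smul_mul_assoc]

lemma Lfun_add (A B C : M) : Lfun A (B + C) = Lfun A B + Lfun A C := by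
  rw [Lfun, Lfun, Lfun, ← Summable.tsum_add (summable_Sk A B) (summable_Sk A C)]
  exact tsum_congr fun k => by rw [Sk_add, smul_add]

lemma Lfun_smul (A : M) (c : ℝ) (B : M) : Lfun A (c • B) = c • Lfun A B := by
  rw [Lfun, Lfun, ← tsum_const_smul'']
  exact tsum_congr fun k => by rw [Sk_smul, smul_comm]

lemma Lfun_norm_le (A B : M) : ‖Lfun A B‖ ≤ Real.exp ‖A‖ * ‖B‖ := by
  have h : ∀ k : ℕ, ‖((k.factorial : ℝ))⁻¹ • Sk k A B‖
      ≤ ((k.factorial : ℝ))⁻¹ * ((k : ℝ) * ‖A‖ ^ (k-1)) * ‖B‖ := by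
    intro k
    rw [norm_smul, Real.norm_eq_abs, abs_of_nonneg (by positivity)]
    calc ((k.factorial:ℝ))⁻¹ * ‖Sk k A B‖
        ≤ ((k.factorial:ℝ))⁻¹ * ((k:ℝ) * ‖A‖ ^ (k-1) * ‖B‖) :=
          mul_le_mul_of_nonneg_left (Sk_norm_le k A B) (by positivity)
      _ = ((k.factorial : ℝ))⁻¹ * ((k : ℝ) * ‖A‖ ^ (k-1)) * ‖B‖ := by ring
  calc ‖Lfun A B‖ ≤ ∑' k : ℕ, ((k.factorial : ℝ))⁻¹ * ((k : ℝ) * ‖A‖ ^ (k-1)) * ‖B‖ :=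
        tsum_of_norm_bounded ((summable_aux ‖A‖).mul_right ‖B‖).hasSum h
  _ = Real.exp ‖A‖ * ‖B‖ := by rw [tsum_mul_right, tsum_aux]

noncomputable def LC (A : M) : M →L[ℝ] M :=
  LinearMap.mkContinuous
    { toFun := Lfun A, map_add' := Lfun_add A, map_smul' := Lfun_smul A }
    (Real.exp ‖A‖) (Lfun_norm_le A)

@[simp] lemma LC_apply (A B : M) : LC A B = Lfun A B := rfl


lemma summable_exp_real (a : ℝ) : Summable fun k : ℕ => ((k.factorial : ℝ))⁻¹ * a ^ k :=
  (Real.summable_pow_div_factorial a).congr fun k => by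
    rw [div_eq_mul_inv, mul_comm]

lemma exp_approx (A E : M) (hE : ‖E‖ ≤ 1) :
    ‖NormedSpace.exp (A + E) - NormedSpace.exp A - Lfun A E‖
      ≤ 2 * Real.exp ‖A‖ * ‖E‖ ^ 2 := by
  set a := ‖A‖
  set e := ‖E‖
  have ha : (0:ℝ) ≤ a := norm_nonneg A
  have he : (0:ℝ) ≤ e := norm_nonneg E
  have s1 : Summable fun k : ℕ => ((k.factorial : ℝ))⁻¹ • (A + E) ^ k :=
    NormedSpace.expSeries_summable' (A + E)
  have s2 : Summable fun k : ℕ => ((k.factorial : ℝ))⁻¹ • A ^ k :=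
    NormedSpace.expSeries_summable' A
  have s3 := summable_Sk A E
  have hsplit : NormedSpace.exp (A + E) - NormedSpace.exp A - Lfun A E
      = ∑' k : ℕ, ((k.factorial : ℝ))⁻¹ • ((A + E) ^ k - A ^ k - Sk k A E) := by
    rw [NormedSpace.exp_eq_tsum (𝕂 := ℝ), Lfun, ← Summable.tsum_sub s1 s2, ← Summable.tsum_sub (s1.sub s2) s3]
    exact tsum_congr fun k => by rw [smul_sub, smul_sub]
  set b : ℕ → ℝ := fun k =>
    ((k.factorial : ℝ))⁻¹ * ((a + e) ^ k - a ^ k - (k : ℝ) * a ^ (k-1) * e) with hb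
  have sb : Summable b := by
    have h1 := summable_exp_real (a + e)
    have h2 := summable_exp_real a
    have h3 := (summable_aux a).mul_right e
    exact ((h1.sub h2).sub h3).congr fun k => by rw [hb]; ring
  have hbound : ∀ k : ℕ, ‖((k.factorial : ℝ))⁻¹ • ((A + E) ^ k - A ^ k - Sk k A E)‖ ≤ b k := by
    intro k
    rw [norm_smul, Real.norm_eq_abs, abs_of_nonneg (by positivity), hb]
    exact mul_le_mul_of_nonneg_left (delta_le A E k) (by positivity)
  have htsum : ∑' k, b k = Real.exp (a + e) - Real.exp a - Real.exp a * e := by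
    have h1 := summable_exp_real (a + e)
    have h2 := summable_exp_real a
    have h3 := (summable_aux a).mul_right e
    have : ∑' k, b k = ∑' k : ℕ, (((k.factorial : ℝ))⁻¹ * (a+e)^k
        - ((k.factorial : ℝ))⁻¹ * a^k - ((k.factorial : ℝ))⁻¹ * ((k:ℝ) * a^(k-1)) * e) :=
      tsum_congr fun k => by rw [hb]; ring
    rw [this, Summable.tsum_sub (h1.sub h2) h3, Summable.tsum_sub h1 h2, tsum_exp_real, tsum_exp_real,
      tsum_mul_right, tsum_aux]
  calc ‖NormedSpace.exp (A + E) - NormedSpace.exp A - Lfun A E‖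
      ≤ ∑' k, b k := by rw [hsplit]; exact tsum_of_norm_bounded sb.hasSum hbound
    _ = Real.exp (a + e) - Real.exp a - Real.exp a * e := htsum
    _ ≤ 2 * Real.exp a * e ^ 2 := by
        rw [Real.exp_add]
        have hexp : Real.exp e ≤ (1 + e) + e ^ 2 * (2 + 1) / (Nat.factorial 2 * 2) := by
          have := Real.exp_bound' he hE (n := 2) (by norm_num)
          simpa [Finset.sum_range_succ] using this
        norm_num at hexp
        have hpos := Real.exp_pos a
        nlinarith [mul_le_mul_of_nonneg_left hexp hpos.le, sq_nonneg e]

lemma hasFDerivAt_expM (A : M) : HasFDerivAt (NormedSpace.exp) (LC A) A := by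
  refine hasFDerivAt_iff_isLittleO_nhds_zero.mpr ?_
  have h1 : (fun E : M => NormedSpace.exp (A + E) - NormedSpace.exp A - LC A E)
      =O[nhds 0] fun E => ‖E‖ ^ 2 := by
    rw [Asymptotics.isBigO_iff]
    refine ⟨2 * Real.exp ‖A‖, ?_⟩
    filter_upwards [Metric.closedBall_mem_nhds (0:M) one_pos] with E hE
    rw [Metric.mem_closedBall, dist_zero_right] at hE
    have := exp_approx A E hE
    rw [LC_apply]
    rwa [Real.norm_eq_abs, abs_of_nonneg (by positivity)]
  exact h1.trans_isLittleO (Asymptotics.isLittleO_norm_pow_id one_lt_two)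

lemma hasDerivAt_exp_comp (Z : ℝ → M) (hZ : Differentiable ℝ Z) (t : ℝ) :
    HasDerivAt (fun s => NormedSpace.exp (Z s)) (Lfun (Z t) (deriv Z t)) t := by
  have h := (hasFDerivAt_expM (Z t)).comp_hasDerivAt t (hZ t).hasDerivAt
  exact h


lemma adM_neg_iter (A B : M) (i : ℕ) :
    (adM (-A))^[i] B
      = ∑ m ∈ range (i+1), ((-1:ℝ)^m * (i.choose m : ℝ)) • (A^m * B * A^(i-m)) := by
  have hfun : adM (-A) = ⇑(LinearMap.mulLeft ℝ (-A) + LinearMap.mulRight ℝ A) := by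
    funext C
    simp [adM, LinearMap.mulLeft_apply, LinearMap.mulRight_apply]
  rw [hfun, ← Module.End.pow_apply,
    (LinearMap.commute_mulLeft_right (-A) A).add_pow i, LinearMap.sum_apply]
  refine Finset.sum_congr rfl fun m hm => ?_
  rw [Module.End.mul_apply, Module.End.mul_apply, LinearMap.pow_mulLeft, LinearMap.pow_mulRight]
  have hA : (-A) ^ m = ((-1:ℝ)^m) • A ^ m := by
    rw [← neg_one_smul ℝ A, smul_pow]
  simp only [Module.End.natCast_apply, LinearMap.mulRight_apply, LinearMap.mulLeft_apply, hA,
    smul_mul_assoc, mul_smul_comm, smul_smul, mul_assoc]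
  rw [mul_comm ((-1:ℝ)^m) (i.choose m : ℝ), mul_smul, Nat.cast_smul_eq_nsmul ℝ]


noncomputable def g (j l m : ℕ) : ℝ := (-1:ℝ)^m * (j.choose m : ℝ) / ((m:ℝ) + (l:ℝ) + 1)

lemma g_top (j l : ℕ) : g j l (j+1) = 0 := by simp [g, Nat.choose_succ_self]

lemma g_zero (j l : ℕ) : g j l 0 = 1 / ((l:ℝ) + 1) := by simp [g]

lemma g_decomp (j l m : ℕ) : g (j+1) l (m+1) = -(g j (l+1) m) + g j l (m+1) := by
  simp only [g, Nat.choose_succ_succ]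
  push_cast
  ring

lemma sum_g_shift (j l : ℕ) :
    ∑ m ∈ range (j+1), g j l (m+1)
      = (∑ m ∈ range (j+1), g j l m) - 1 / ((l:ℝ) + 1) := by
  have h := Finset.sum_range_succ' (g j l) (j+1)
  rw [Finset.sum_range_succ, g_top, add_zero] at h
  rw [eq_sub_iff_add_eq, ← g_zero j l, ← h]

lemma S_step (j l : ℕ) :
    ∑ m ∈ range (j+2), g (j+1) l m
      = (∑ m ∈ range (j+1), g j l m) - ∑ m ∈ range (j+1), g j (l+1) m := by
  rw [Finset.sum_range_succ' (g (j+1) l) (j+1)]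
  have : ∀ m ∈ range (j+1), g (j+1) l (m+1) = -(g j (l+1) m) + g j l (m+1) :=
    fun m _ => g_decomp j l m
  rw [Finset.sum_congr rfl this, Finset.sum_add_distrib, Finset.sum_neg_distrib,
    sum_g_shift, g_zero]
  ring

lemma S_eval (j : ℕ) : ∀ l : ℕ,
    ∑ m ∈ range (j+1), g j l m
      = ((j.factorial : ℝ) * (l.factorial : ℝ)) / ((j+l+1).factorial : ℝ) := by
  induction j with
  | zero =>
    intro l
    rw [Finset.sum_range_one, g_zero]
    have h : ((0+l+1).factorial : ℝ) = ((l:ℝ)+1) * (l.factorial : ℝ) := by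
      rw [zero_add, Nat.factorial_succ]; push_cast; ring
    rw [h]
    have h1 : (l.factorial : ℝ) ≠ 0 := by exact_mod_cast Nat.factorial_ne_zero l
    have h2 : ((l:ℝ)+1) ≠ 0 := by positivity
    field_simp
    simp
  | succ j ih =>
    intro l
    rw [show j + 1 + 1 = j + 2 from rfl, S_step, ih l, ih (l+1)]
    have e1 : j + (l+1) + 1 = j + l + 2 := by omega
    have e2 : j + 1 + l + 1 = j + l + 2 := by omega
    rw [e1, e2]
    have h1 : ((j+l+2).factorial : ℝ) = ((j:ℝ)+(l:ℝ)+2) * ((j+l+1).factorial : ℝ) := by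
      rw [show j+l+2 = (j+l+1)+1 from rfl, Nat.factorial_succ]; push_cast; ring
    have h2 : ((l+1).factorial : ℝ) = ((l:ℝ)+1) * (l.factorial : ℝ) := by
      rw [Nat.factorial_succ]; push_cast; ring
    have h3 : ((j+1).factorial : ℝ) = ((j:ℝ)+1) * (j.factorial : ℝ) := by
      rw [Nat.factorial_succ]; push_cast; ring
    rw [h1, h2, h3]
    have n1 : ((j+l+1).factorial : ℝ) ≠ 0 := by exact_mod_cast Nat.factorial_ne_zero _
    have n2 : ((j:ℝ)+(l:ℝ)+2) ≠ 0 := by positivity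
    field_simp
    ring

lemma term_conv (j l m : ℕ) (hm : m ≤ j) :
    (((j-m).factorial : ℝ))⁻¹ * (((l+m+1).factorial : ℝ))⁻¹ * ((-1:ℝ)^m * (((l+m).choose m : ℕ) : ℝ))
      = ((j.factorial : ℝ))⁻¹ * ((l.factorial : ℝ))⁻¹ * g j l m := by
  have h1 : ((j.choose m : ℕ) : ℝ) * (m.factorial : ℝ) * ((j-m).factorial : ℝ) = (j.factorial : ℝ) := by
    exact_mod_cast Nat.choose_mul_factorial_mul_factorial hm
  have h2 : (((l+m).choose m : ℕ) : ℝ) * (m.factorial : ℝ) * (l.factorial : ℝ) = ((l+m).factorial : ℝ) := by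
    have := Nat.choose_mul_factorial_mul_factorial (Nat.le_add_left m l)
    rw [Nat.add_sub_cancel] at this
    exact_mod_cast this
  have h3 : ((l+m+1).factorial : ℝ) = ((l:ℝ)+(m:ℝ)+1) * ((l+m).factorial : ℝ) := by
    rw [Nat.factorial_succ]; push_cast; ring
  have n1 : (m.factorial : ℝ) ≠ 0 := by exact_mod_cast Nat.factorial_ne_zero _
  have n2 : ((j-m).factorial : ℝ) ≠ 0 := by exact_mod_cast Nat.factorial_ne_zero _
  have n3 : (l.factorial : ℝ) ≠ 0 := by exact_mod_cast Nat.factorial_ne_zero _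
  have n4 : (j.factorial : ℝ) ≠ 0 := by exact_mod_cast Nat.factorial_ne_zero _
  have n5 : ((l+m).factorial : ℝ) ≠ 0 := by exact_mod_cast Nat.factorial_ne_zero _
  have n6 : ((l:ℝ)+(m:ℝ)+1) ≠ 0 := by positivity
  have n7 : ((m:ℝ)+(l:ℝ)+1) ≠ 0 := by positivity
  have hc1 : ((j.choose m : ℕ) : ℝ) = (j.factorial : ℝ) / ((m.factorial : ℝ) * ((j-m).factorial : ℝ)) := by
    rw [eq_div_iff (by exact mul_ne_zero n1 n2)]
    linear_combination h1
  have hc2 : (((l+m).choose m : ℕ) : ℝ)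
      = ((l+m).factorial : ℝ) / ((m.factorial : ℝ) * (l.factorial : ℝ)) := by
    rw [eq_div_iff (by exact mul_ne_zero n1 n3)]
    linear_combination h2
  rw [g, hc1, hc2, h3]
  field_simp
  ring

lemma coeff_eval (j l : ℕ) :
    ∑ m ∈ range (j+1),
        (((j-m).factorial : ℝ))⁻¹ * (((l+m+1).factorial : ℝ))⁻¹
          * ((-1:ℝ)^m * (((l+m).choose m : ℕ) : ℝ))
      = (((j+l+1).factorial : ℝ))⁻¹ := by
  have h : ∀ m ∈ range (j+1),
      (((j-m).factorial : ℝ))⁻¹ * (((l+m+1).factorial : ℝ))⁻¹ * ((-1:ℝ)^m * (((l+m).choose m : ℕ) : ℝ))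
        = ((j.factorial : ℝ))⁻¹ * ((l.factorial : ℝ))⁻¹ * g j l m := by
    intro m hm
    rw [Finset.mem_range] at hm
    exact term_conv j l m (by omega)
  rw [Finset.sum_congr rfl h, ← Finset.mul_sum, S_eval j l]
  have n3 : (l.factorial : ℝ) ≠ 0 := by exact_mod_cast Nat.factorial_ne_zero _
  have n4 : (j.factorial : ℝ) ≠ 0 := by exact_mod_cast Nat.factorial_ne_zero _
  have n5 : ((j+l+1).factorial : ℝ) ≠ 0 := by exact_mod_cast Nat.factorial_ne_zero _
  field_simp


lemma adM_norm_le (X C : M) : ‖adM X C‖ ≤ 2 * ‖X‖ * ‖C‖ := by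
  calc ‖adM X C‖ ≤ ‖X * C‖ + ‖C * X‖ := norm_sub_le _ _
  _ ≤ ‖X‖ * ‖C‖ + ‖C‖ * ‖X‖ := add_le_add (norm_mul_le _ _) (norm_mul_le _ _)
  _ = 2 * ‖X‖ * ‖C‖ := by ring

lemma adM_iter_norm_le (X B : M) (i : ℕ) : ‖(adM X)^[i] B‖ ≤ (2 * ‖X‖)^i * ‖B‖ := by
  induction i generalizing B with
  | zero => simp
  | succ i ih =>
    rw [Function.iterate_succ_apply]
    calc ‖(adM X)^[i] (adM X B)‖ ≤ (2 * ‖X‖)^i * ‖adM X B‖ := ih _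
    _ ≤ (2 * ‖X‖)^i * (2 * ‖X‖ * ‖B‖) :=
        mul_le_mul_of_nonneg_left (adM_norm_le X B) (by positivity)
    _ = (2 * ‖X‖)^(i+1) * ‖B‖ := by rw [pow_succ]; ring

lemma summable_norm_dexp (X B : M) :
    Summable fun i : ℕ => ‖(((i + 1).factorial : ℝ))⁻¹ • (adM X)^[i] B‖ := by
  refine Summable.of_nonneg_of_le (fun i => norm_nonneg _)
    (fun i => ?_) (((Real.summable_pow_div_factorial (2 * ‖X‖)).mul_right ‖B‖))
  rw [norm_smul, Real.norm_eq_abs, abs_of_nonneg (by positivity)]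
  calc (((i + 1).factorial : ℝ))⁻¹ * ‖(adM X)^[i] B‖
      ≤ ((i.factorial : ℝ))⁻¹ * ((2 * ‖X‖)^i * ‖B‖) := by
        apply mul_le_mul
        · apply inv_anti₀
          · exact_mod_cast Nat.factorial_pos i
          · exact_mod_cast Nat.factorial_le (Nat.le_succ i)
        · exact adM_iter_norm_le X B i
        · exact norm_nonneg _
        · positivity
    _ = (2 * ‖X‖)^i / (i.factorial : ℝ) * ‖B‖ := by rw [div_eq_mul_inv]; ring

lemma perN (A B : M) (N : ℕ) :
    ∑ kl ∈ Finset.HasAntidiagonal.antidiagonal N,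
        (((kl.1.factorial : ℝ))⁻¹ • A ^ kl.1)
          * ((((kl.2 + 1).factorial : ℝ))⁻¹ • (adM (-A))^[kl.2] B)
      = (((N+1).factorial : ℝ))⁻¹ • Sk (N+1) A B := by
  rw [Finset.Nat.sum_antidiagonal_eq_sum_range_succ_mk]
  have step1 : ∀ p ∈ range (N+1),
      (((p.factorial : ℝ))⁻¹ • A ^ p) * ((((N - p + 1).factorial : ℝ))⁻¹ • (adM (-A))^[N-p] B)
        = ∑ m ∈ range (N - p + 1),
            (((p.factorial : ℝ))⁻¹ * ((((N-p) + 1).factorial : ℝ))⁻¹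
                * ((-1:ℝ)^m * (((N-p).choose m : ℕ) : ℝ)))
              • (A ^ (p + m) * B * A ^ (N - p - m)) := by
    intro p hp
    rw [adM_neg_iter, Finset.smul_sum, Finset.mul_sum]
    refine Finset.sum_congr rfl fun m hm => ?_
    rw [smul_smul, smul_mul_smul_comm]
    congr 1
    · ring
    · rw [← mul_assoc, ← mul_assoc, ← pow_add]
  rw [Finset.sum_congr rfl step1]
  rw [Finset.sum_sigma']
  have rhs_expand : (((N+1).factorial : ℝ))⁻¹ • Sk (N+1) A B
      = ∑ j ∈ range (N+1), ∑ m ∈ range (j+1),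
          ((((j-m).factorial : ℝ))⁻¹ * ((((N-j)+m+1).factorial : ℝ))⁻¹
              * ((-1:ℝ)^m * ((((N-j)+m).choose m : ℕ) : ℝ)))
            • (A ^ j * B * A ^ (N - j)) := by
    rw [Sk, Finset.smul_sum]
    refine Finset.sum_congr rfl fun j hj => ?_
    rw [Finset.mem_range] at hj
    rw [← Finset.sum_smul, coeff_eval j (N-j)]
    have e : j + (N - j) + 1 = N + 1 := by omega
    have e2 : N + 1 - 1 - j = N - j := by omega
    rw [e, e2]
  rw [rhs_expand, Finset.sum_sigma']
  refine Finset.sum_bij' (fun x _ => ⟨x.1 + x.2, x.2⟩) (fun y _ => ⟨y.1 - y.2, y.2⟩)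
    ?_ ?_ ?_ ?_ ?_
  · rintro ⟨p, m⟩ h
    simp only [Finset.mem_sigma, Finset.mem_range] at h ⊢
    omega
  · rintro ⟨j, m⟩ h
    simp only [Finset.mem_sigma, Finset.mem_range] at h ⊢
    omega
  · rintro ⟨p, m⟩ h
    simp only [Finset.mem_sigma, Finset.mem_range] at h
    have e1 : p + m - m = p := by omega
    simp [e1]
  · rintro ⟨j, m⟩ h
    simp only [Finset.mem_sigma, Finset.mem_range] at h
    have e1 : j - m + m = j := by omega
    simp [e1]
  · rintro ⟨p, m⟩ h
    simp only [Finset.mem_sigma, Finset.mem_range] at h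
    obtain ⟨h1, h2⟩ := h
    have e1 : p + m - m = p := by omega
    have e2 : N - (p + m) + m = N - p := by omega
    have e3 : N - (p + m) = N - p - m := by omega
    rw [e1, e2, e3]


lemma Lfun_eq (A B : M) : Lfun A B = NormedSpace.exp A * dexp (-A) B := by
  have hsn : Summable fun k : ℕ => ‖((k.factorial : ℝ))⁻¹ • A ^ k‖ :=
    NormedSpace.norm_expSeries_summable' A
  rw [NormedSpace.exp_eq_tsum (𝕂 := ℝ), dexp]
  beta_reduce
  refine Eq.trans ?_
    (tsum_mul_tsum_eq_tsum_sum_antidiagonal_of_summable_norm hsn (summable_norm_dexp (-A) B)).symm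
  rw [Lfun, Summable.tsum_eq_zero_add (summable_Sk A B)]
  rw [Sk_zero, smul_zero, zero_add]
  exact tsum_congr fun N => (perN A B N).symm

end DexpAux

theorem deriv_exp_left_trivialized {n : ℕ} (Z : ℝ → Matrix (Fin n) (Fin n) ℝ)
    (hZ : Differentiable ℝ Z) (t : ℝ) :
    deriv (fun s => NormedSpace.exp (Z s)) t =
      NormedSpace.exp (Z t) * dexp (-(Z t)) (deriv Z t) := by
  have hd := DexpAux.hasDerivAt_exp_comp Z hZ t
  refine hd.deriv.trans ?_
  rw [DexpAux.Lfun_eq]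
end
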